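/- Let m ≤ n and let {A,B} be an (m,p,n)-GMP with GSVD as in the context, with generalized singular values (αᵢ, βᵢ); in particular α_{m+1} = ⋯ = αₙ = 0. Then for every 1 ≤ i ≤ m, αᵢ equals the difference of maxima: αᵢ = max_{Π₃ ∈ 𝕌_n, Π₄ ∈ 𝕌_m} |tr(Π₃ (AᴴA + BᴴB)^{-1/2} Aᴴ Π₄ 𝒮_i)| − max_{Π₃ ∈ 𝕌_n, Π₄ ∈ 𝕌_m} |tr(Π₃ (AᴴA + BᴴB)^{-1/2} Aᴴ Π₄ 𝒮_{i-1})|. -/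

import Mathlib

open Matrix BigOperators
open scoped ComplexOrder

namespace Stmt6Aux

def Et (m n t : ℕ) : Matrix (Fin m) (Fin n) ℂ :=
  Matrix.of fun k l => if (k : ℕ) = (l : ℕ) ∧ (k : ℕ) < t then (1 : ℂ) else 0

def Sig {m n : ℕ} (α : Fin n → ℝ) : Matrix (Fin m) (Fin n) ℂ :=
  Matrix.of fun (k : Fin m) (l : Fin n) =>
    if (k : ℕ) = (l : ℕ) then Complex.ofReal (α l) else 0

lemma trace_formula {m n : ℕ} (hmn : m ≤ n) (α : Fin n → ℝ) (t : ℕ)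
    (V3 : Matrix (Fin n) (Fin n) ℂ) (V4 : Matrix (Fin m) (Fin m) ℂ) :
    Matrix.trace (V3 * (Sig (m := m) α)ᴴ * V4 * Et m n t)
      = ∑ k : Fin m, (α (Fin.castLE hmn k) : ℂ) *
          ∑ a ∈ Finset.univ.filter (fun a : Fin m => (a : ℕ) < t),
            V4 k a * V3 (Fin.castLE hmn a) (Fin.castLE hmn k) := by
  classical
  set X : Matrix (Fin n) (Fin m) ℂ := V3 * (Sig (m := m) α)ᴴ * V4 with hXdef
  have hVS : ∀ (l : Fin n) (a : Fin m),
      (V3 * (Sig (m := m) α)ᴴ) l a = V3 l (Fin.castLE hmn a) * (α (Fin.castLE hmn a) : ℂ) := by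
    intro l a
    rw [Matrix.mul_apply]
    rw [Finset.sum_eq_single (Fin.castLE hmn a)]
    · simp [Sig, conjTranspose_apply, Fin.castLE]
    · intro b _ hb
      have : ¬ ((a : ℕ) = (b : ℕ)) := fun h => hb (Fin.ext h.symm)
      simp [Sig, conjTranspose_apply, this]
    · simp
  have hX : ∀ (l : Fin n) (k : Fin m),
      X l k = ∑ a : Fin m, V3 l (Fin.castLE hmn a) * (α (Fin.castLE hmn a) : ℂ) * V4 a k := by
    intro l k
    rw [hXdef, Matrix.mul_apply]
    exact Finset.sum_congr rfl fun a _ => by rw [hVS]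
  have key : ∀ k : Fin m, (∑ l : Fin n, X l k * Et m n t k l)
      = (if (k : ℕ) < t then X (Fin.castLE hmn k) k else 0) := by
    intro k
    rw [Finset.sum_eq_single (Fin.castLE hmn k)]
    · by_cases h : (k : ℕ) < t
      · simp [Et, Fin.castLE, h]
      · simp [Et, Fin.castLE, h]
    · intro l _ hl
      have : ¬ ((k : ℕ) = (l : ℕ)) := fun h => hl (Fin.ext h.symm)
      simp [Et, this]
    · simp
  calc Matrix.trace (X * Et m n t)
      = ∑ l : Fin n, ∑ k : Fin m, X l k * Et m n t k l := by
        simp [Matrix.trace, Matrix.mul_apply, Matrix.diag]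
    _ = ∑ k : Fin m, ∑ l : Fin n, X l k * Et m n t k l := Finset.sum_comm
    _ = ∑ k : Fin m, (if (k : ℕ) < t then X (Fin.castLE hmn k) k else 0) :=
        Finset.sum_congr rfl fun k _ => key k
    _ = ∑ k : Fin m, ∑ a : Fin m, (if (k : ℕ) < t then
          V3 (Fin.castLE hmn k) (Fin.castLE hmn a) * (α (Fin.castLE hmn a) : ℂ) * V4 a k else 0) := by
        refine Finset.sum_congr rfl fun k _ => ?_
        split
        · rw [hX]
        · simp
    _ = ∑ a : Fin m, ∑ k : Fin m, (if (k : ℕ) < t then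
          V3 (Fin.castLE hmn k) (Fin.castLE hmn a) * (α (Fin.castLE hmn a) : ℂ) * V4 a k else 0) :=
        Finset.sum_comm
    _ = ∑ k : Fin m, (α (Fin.castLE hmn k) : ℂ) *
          ∑ a ∈ Finset.univ.filter (fun a : Fin m => (a : ℕ) < t),
            V4 k a * V3 (Fin.castLE hmn a) (Fin.castLE hmn k) := by
        refine Finset.sum_congr rfl fun a _ => ?_
        rw [Finset.mul_sum, Finset.sum_filter]
        refine Finset.sum_congr rfl fun k _ => ?_
        split <;> ring

end Stmt6Aux

namespace Stmt6Aux2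
open Stmt6Aux

lemma row_sum {ι : Type*} [Fintype ι] [DecidableEq ι] {V : Matrix ι ι ℂ}
    (hV : V ∈ Matrix.unitaryGroup ι ℂ) (k : ι) :
    ∑ a, ‖V k a‖ ^ 2 = 1 := by
  have h := Matrix.mem_unitaryGroup_iff.mp hV
  have h2 := congrFun (congrFun h k) k
  rw [Matrix.mul_apply, Matrix.one_apply_eq] at h2
  have h3 : ∑ a, (Complex.normSq (V k a) : ℂ) = 1 := by
    rw [← h2]
    exact Finset.sum_congr rfl fun a _ => by
      rw [Matrix.star_apply, ← Complex.mul_conj, Complex.star_def]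
  have h4 : ((∑ a, Complex.normSq (V k a) : ℝ) : ℂ) = ((1 : ℝ) : ℂ) := by
    push_cast
    simpa using h3
  have h5 := Complex.ofReal_injective h4
  rw [← h5]
  exact Finset.sum_congr rfl fun a _ => Complex.sq_norm _

lemma col_sum {ι : Type*} [Fintype ι] [DecidableEq ι] {V : Matrix ι ι ℂ}
    (hV : V ∈ Matrix.unitaryGroup ι ℂ) (k : ι) :
    ∑ a, ‖V a k‖ ^ 2 = 1 := by
  have h := Matrix.mem_unitaryGroup_iff'.mp hV
  have h2 := congrFun (congrFun h k) k
  rw [Matrix.mul_apply, Matrix.one_apply_eq] at h2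
  have h3 : ∑ a, (Complex.normSq (V a k) : ℂ) = 1 := by
    rw [← h2]
    exact Finset.sum_congr rfl fun a _ => by
      rw [Matrix.star_apply, ← Complex.mul_conj, mul_comm, Complex.star_def]
  have h4 : ((∑ a, Complex.normSq (V a k) : ℝ) : ℂ) = ((1 : ℝ) : ℂ) := by
    push_cast
    simpa using h3
  have h5 := Complex.ofReal_injective h4
  rw [← h5]
  exact Finset.sum_congr rfl fun a _ => Complex.sq_norm _

lemma card_filter_lt {m t : ℕ} (ht : t ≤ m) :
    (Finset.univ.filter (fun k : Fin m => (k : ℕ) < t)).card = t := by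
  rw [← Finset.card_range t]
  apply Finset.card_bij (fun (k : Fin m) _ => (k : ℕ))
  · intro k hk
    simp only [Finset.mem_filter] at hk
    simpa using hk.2
  · intro k _ k' _ h
    exact Fin.ext h
  · intro b hb
    have hb' : b < t := Finset.mem_range.mp hb
    exact ⟨⟨b, lt_of_lt_of_le hb' ht⟩, by simp [hb'], rfl⟩

lemma major {m n : ℕ} (hmn : m ≤ n) (α : Fin n → ℝ)
    (hα0 : ∀ k, 0 ≤ α k) (hα1 : ∀ k, α k ≤ 1) (hmono : Antitone α)
    (t : ℕ) (ht : t ≤ m) (c : Fin m → ℝ)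
    (hc0 : ∀ k, 0 ≤ c k) (hc1 : ∀ k, c k ≤ 1)
    (hcs : ∑ k, c k ≤ t) :
    ∑ k : Fin m, α (Fin.castLE hmn k) * c k ≤
      ∑ k ∈ Finset.univ.filter (fun k : Fin m => (k : ℕ) < t), α (Fin.castLE hmn k) := by
  classical
  set θ : ℝ := if h : t = 0 then 1 else α (Fin.castLE hmn ⟨t - 1, by omega⟩) with hθ
  have hθ0 : 0 ≤ θ := by
    rw [hθ]; split
    · norm_num
    · exact hα0 _
  have hθle : ∀ k : Fin m, (k : ℕ) < t → θ ≤ α (Fin.castLE hmn k) := by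
    intro k hk
    rw [hθ]
    split
    · omega
    · exact hmono (by simp [Fin.le_def]; omega)
  have hθge : ∀ k : Fin m, t ≤ (k : ℕ) → α (Fin.castLE hmn k) ≤ θ := by
    intro k hk
    rw [hθ]
    split
    · exact hα1 _
    · exact hmono (by simp [Fin.le_def]; omega)
  set F := Finset.univ.filter (fun k : Fin m => (k : ℕ) < t) with hF
  have hsplit : ∑ k : Fin m, α (Fin.castLE hmn k) * c k
      = ∑ k ∈ F, α (Fin.castLE hmn k) * c k + ∑ k ∈ Fᶜ, α (Fin.castLE hmn k) * c k :=
    (Finset.sum_add_sum_compl F _).symm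
  have h1 : ∑ k ∈ F, α (Fin.castLE hmn k) * c k
      ≤ ∑ k ∈ F, (α (Fin.castLE hmn k) + θ * (c k - 1)) := by
    apply Finset.sum_le_sum
    intro k hk
    have hkt : (k : ℕ) < t := (Finset.mem_filter.mp hk).2
    nlinarith [hθle k hkt, hc1 k, hc0 k]
  have h2 : ∑ k ∈ Fᶜ, α (Fin.castLE hmn k) * c k ≤ ∑ k ∈ Fᶜ, θ * c k := by
    apply Finset.sum_le_sum
    intro k hk
    have hkt : t ≤ (k : ℕ) := by
      have := Finset.mem_compl.mp hk
      simp [hF] at this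
      omega
    nlinarith [hθge k hkt, hc0 k]
  have hcard : F.card = t := card_filter_lt ht
  have h3 : ∑ k ∈ F, (α (Fin.castLE hmn k) + θ * (c k - 1)) + ∑ k ∈ Fᶜ, θ * c k
      ≤ ∑ k ∈ F, α (Fin.castLE hmn k) := by
    rw [Finset.sum_add_distrib]
    have e1 : ∑ k ∈ F, (c k - 1) = ∑ k ∈ F, c k - F.card := by
      rw [Finset.sum_sub_distrib, Finset.sum_const, nsmul_eq_mul, mul_one]
    have e2 : ∑ k ∈ F, c k + ∑ k ∈ Fᶜ, c k = ∑ k, c k := Finset.sum_add_sum_compl F c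
    have e3 : ∑ k ∈ F, θ * (c k - 1) + ∑ k ∈ Fᶜ, θ * c k
        = θ * ((∑ k, c k) - t) := by
      rw [← Finset.mul_sum, ← Finset.mul_sum, ← mul_add, e1, ← e2, hcard]
      ring
    nlinarith [e3, hcs, hθ0]
  linarith [hsplit, h1, h2, h3]

end Stmt6Aux2

namespace Stmt6Aux3
open Stmt6Aux Stmt6Aux2

set_option maxHeartbeats 1000000 in
lemma abs_trace_le {m n : ℕ} (hmn : m ≤ n) (α : Fin n → ℝ)
    (hα0 : ∀ k, 0 ≤ α k) (hα1 : ∀ k, α k ≤ 1) (hmono : Antitone α)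
    (t : ℕ) (ht : t ≤ m)
    {V3 : Matrix (Fin n) (Fin n) ℂ} {V4 : Matrix (Fin m) (Fin m) ℂ}
    (hV3 : V3 ∈ Matrix.unitaryGroup (Fin n) ℂ) (hV4 : V4 ∈ Matrix.unitaryGroup (Fin m) ℂ) :
    ‖Matrix.trace (V3 * (Sig (m := m) α)ᴴ * V4 * Et m n t)‖
      ≤ ∑ k ∈ Finset.univ.filter (fun k : Fin m => (k : ℕ) < t), α (Fin.castLE hmn k) := by
  classical
  set F := Finset.univ.filter (fun a : Fin m => (a : ℕ) < t) with hF
  set c : Fin m → ℝ := fun k =>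
    ∑ a ∈ F, (‖V4 k a‖ ^ 2 + ‖V3 (Fin.castLE hmn a) (Fin.castLE hmn k)‖ ^ 2) / 2
    with hc
  have himg : ∀ (g : Fin n → ℝ), (∀ b, 0 ≤ g b) → ∀ (G : Finset (Fin m)),
      ∑ a ∈ G, g (Fin.castLE hmn a) ≤ ∑ b : Fin n, g b := by
    intro g hg G
    rw [← Finset.sum_image (f := g) (g := Fin.castLE hmn)
      (by intro x _ y _ h; exact Fin.castLE_injective hmn h)]
    exact Finset.sum_le_sum_of_subset_of_nonneg (Finset.subset_univ _) (fun b _ _ => hg b)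
  have hc0 : ∀ k, 0 ≤ c k := by
    intro k
    apply Finset.sum_nonneg
    intro a _
    positivity
  have hc1 : ∀ k, c k ≤ 1 := by
    intro k
    have h4 : ∑ a ∈ F, ‖V4 k a‖ ^ 2 ≤ 1 := by
      rw [← row_sum hV4 k]
      exact Finset.sum_le_sum_of_subset_of_nonneg (Finset.subset_univ _)
        (fun b _ _ => sq_nonneg _)
    have h3 : ∑ a ∈ F, ‖V3 (Fin.castLE hmn a) (Fin.castLE hmn k)‖ ^ 2 ≤ 1 := by
      calc ∑ a ∈ F, ‖V3 (Fin.castLE hmn a) (Fin.castLE hmn k)‖ ^ 2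
          ≤ ∑ b : Fin n, ‖V3 b (Fin.castLE hmn k)‖ ^ 2 :=
            himg (fun b => ‖V3 b (Fin.castLE hmn k)‖ ^ 2) (fun b => sq_nonneg _) F
        _ = 1 := col_sum hV3 _
    simp only [hc]
    rw [← Finset.sum_div, Finset.sum_add_distrib]
    linarith
  have hcs : ∑ k, c k ≤ (t : ℝ) := by
    have hswap : ∑ k, c k = ∑ a ∈ F, ∑ k : Fin m,
        (‖V4 k a‖ ^ 2 + ‖V3 (Fin.castLE hmn a) (Fin.castLE hmn k)‖ ^ 2) / 2 := by
      rw [hc]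
      exact Finset.sum_comm
    rw [hswap]
    have hbound : ∀ a ∈ F, ∑ k : Fin m,
        (‖V4 k a‖ ^ 2 + ‖V3 (Fin.castLE hmn a) (Fin.castLE hmn k)‖ ^ 2) / 2 ≤ 1 := by
      intro a _
      have h4 : ∑ k : Fin m, ‖V4 k a‖ ^ 2 = 1 := col_sum hV4 a
      have h3 : ∑ k : Fin m, ‖V3 (Fin.castLE hmn a) (Fin.castLE hmn k)‖ ^ 2 ≤ 1 := by
        calc ∑ k : Fin m, ‖V3 (Fin.castLE hmn a) (Fin.castLE hmn k)‖ ^ 2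
            = ∑ k ∈ Finset.univ, ‖V3 (Fin.castLE hmn a) (Fin.castLE hmn k)‖ ^ 2 := rfl
          _ ≤ ∑ b : Fin n, ‖V3 (Fin.castLE hmn a) b‖ ^ 2 :=
              himg (fun b => ‖V3 (Fin.castLE hmn a) b‖ ^ 2) (fun b => sq_nonneg _) Finset.univ
          _ = 1 := row_sum hV3 _
      rw [← Finset.sum_div, Finset.sum_add_distrib]
      linarith
    calc ∑ a ∈ F, ∑ k : Fin m,
        (‖V4 k a‖ ^ 2 + ‖V3 (Fin.castLE hmn a) (Fin.castLE hmn k)‖ ^ 2) / 2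
        ≤ ∑ _a ∈ F, (1 : ℝ) := Finset.sum_le_sum hbound
      _ = F.card := by simp
      _ = t := by rw [card_filter_lt ht]
  rw [trace_formula hmn α t V3 V4]
  calc ‖∑ k : Fin m, (α (Fin.castLE hmn k) : ℂ) *
          ∑ a ∈ F, V4 k a * V3 (Fin.castLE hmn a) (Fin.castLE hmn k)‖
      ≤ ∑ k : Fin m, ‖(α (Fin.castLE hmn k) : ℂ) *
          ∑ a ∈ F, V4 k a * V3 (Fin.castLE hmn a) (Fin.castLE hmn k)‖ :=
        norm_sum_le _ _
    _ ≤ ∑ k : Fin m, α (Fin.castLE hmn k) * c k := by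
        apply Finset.sum_le_sum
        intro k _
        rw [norm_mul, Complex.norm_real, Real.norm_eq_abs, abs_of_nonneg (hα0 _)]
        apply mul_le_mul_of_nonneg_left _ (hα0 _)
        calc ‖∑ a ∈ F, V4 k a * V3 (Fin.castLE hmn a) (Fin.castLE hmn k)‖
            ≤ ∑ a ∈ F, ‖V4 k a * V3 (Fin.castLE hmn a) (Fin.castLE hmn k)‖ :=
              norm_sum_le _ _
          _ ≤ c k := by
              simp only [hc]
              apply Finset.sum_le_sum
              intro a _
              rw [norm_mul]
              nlinarith [sq_nonneg (‖V4 k a‖ -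
                  ‖V3 (Fin.castLE hmn a) (Fin.castLE hmn k)‖),
                norm_nonneg (V4 k a),
                norm_nonneg (V3 (Fin.castLE hmn a) (Fin.castLE hmn k))]
    _ ≤ ∑ k ∈ F, α (Fin.castLE hmn k) :=
        major hmn α hα0 hα1 hmono t ht c hc0 hc1 hcs

end Stmt6Aux3

namespace Stmt6Aux4
open Stmt6Aux Stmt6Aux2 Stmt6Aux3

set_option maxHeartbeats 1000000 in
lemma sup_eq
    {m p n : ℕ} (hmn : m ≤ n)
    (A : Matrix (Fin m) (Fin n) ℂ) (B : Matrix (Fin p) (Fin n) ℂ)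
    (U : Matrix (Fin m) (Fin m) ℂ) (hU : U ∈ Matrix.unitaryGroup (Fin m) ℂ)
    (R : Matrix (Fin n) (Fin n) ℂ)
    (α : Fin n → ℝ)
    (hα0 : ∀ k, 0 ≤ α k) (hα1 : ∀ k, α k ≤ 1) (hmono : Antitone α)
    (hzero : ∀ k : Fin n, m ≤ (k : ℕ) → α k = 0)
    (hA : A = U * Sig (m := m) α * R)
    (hBB : Bᴴ * B = Rᴴ * Matrix.diagonal (fun l => Complex.ofReal (1 - α l ^ 2)) * R)
    (S : Matrix (Fin n) (Fin n) ℂ) (hS : S.PosDef)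
    (hSsq : S * S = Aᴴ * A + Bᴴ * B)
    (t : ℕ) (ht : t ≤ m) :
    (⨆ W3 : Matrix.unitaryGroup (Fin n) ℂ, ⨆ W4 : Matrix.unitaryGroup (Fin m) ℂ,
      ‖Matrix.trace ((W3 : Matrix (Fin n) (Fin n) ℂ) * S⁻¹ * Aᴴ *
        (W4 : Matrix (Fin m) (Fin m) ℂ) * Et m n t)‖)
      = ∑ k ∈ Finset.univ.filter (fun k : Fin m => (k : ℕ) < t), α (Fin.castLE hmn k) := by
  classical
  have hUU : Uᴴ * U = 1 := Matrix.mem_unitaryGroup_iff'.mp hU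
  have hAH : Aᴴ = Rᴴ * (Sig (m := m) α)ᴴ * Uᴴ := by
    rw [hA, Matrix.conjTranspose_mul, Matrix.conjTranspose_mul, Matrix.mul_assoc]
  -- Σᴴ Σ = diagonal α²
  have hSig2 : (Sig (m := m) α)ᴴ * Sig (m := m) α = Matrix.diagonal (fun l => ((α l : ℂ))^2) := by
    ext l l'
    rw [Matrix.mul_apply, Matrix.diagonal_apply]
    by_cases h : l = l'
    · subst h
      simp only [if_pos rfl]
      by_cases hl : (l : ℕ) < m
      · rw [Finset.sum_eq_single (⟨(l : ℕ), hl⟩ : Fin m)]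
        · simp [Sig, conjTranspose_apply]
          ring
        · intro b _ hb
          have : ¬ ((b : ℕ) = (l : ℕ)) := fun h => hb (Fin.ext h)
          simp [Sig, conjTranspose_apply, this]
        · simp
      · rw [hzero l (by omega)]
        rw [Finset.sum_eq_zero]
        · norm_num
        · intro b _
          have : ¬ ((b : ℕ) = (l : ℕ)) := by omega
          simp [Sig, conjTranspose_apply, this]
    · rw [if_neg h]
      rw [Finset.sum_eq_zero]
      intro b _
      by_cases h1 : (b : ℕ) = (l : ℕ)
      · have h2 : ¬ ((b : ℕ) = (l' : ℕ)) := by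
          intro h2
          exact h (Fin.ext (h1.symm.trans h2))
        simp [Sig, conjTranspose_apply, h2]
      · simp [Sig, conjTranspose_apply, h1]
  have hSS : S * S = Rᴴ * R := by
    rw [hSsq, hAH, hA, hBB]
    have e1 : Rᴴ * (Sig (m:=m) α)ᴴ * Uᴴ * (U * Sig (m:=m) α * R) = Rᴴ * ((Sig (m:=m) α)ᴴ * Sig (m:=m) α) * R := by
      have e0 : Rᴴ * (Sig (m:=m) α)ᴴ * Uᴴ * (U * Sig (m:=m) α * R)
          = Rᴴ * ((Sig (m:=m) α)ᴴ * ((Uᴴ * U) * (Sig (m:=m) α * R))) := by simp only [Matrix.mul_assoc]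
      rw [e0, hUU]
      simp only [Matrix.one_mul, Matrix.mul_assoc]
    rw [e1, hSig2, ← Matrix.add_mul, ← Matrix.mul_add, Matrix.diagonal_add]
    have e2 : Matrix.diagonal (fun l : Fin n => ((α l : ℂ))^2 + Complex.ofReal (1 - α l ^ 2)) =
        (1 : Matrix (Fin n) (Fin n) ℂ) := by
      rw [← Matrix.diagonal_one]
      congr 1
      funext l
      push_cast
      ring
    rw [e2, Matrix.mul_one]
  have hSdet : IsUnit S.det := (Matrix.isUnit_iff_isUnit_det S).mp hS.isUnit
  have hSinv : S⁻¹ᴴ = S⁻¹ := by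
    rw [Matrix.conjTranspose_nonsing_inv, hS.isHermitian]
  set Q : Matrix (Fin n) (Fin n) ℂ := S⁻¹ * Rᴴ with hQdef
  have hQ : Q ∈ Matrix.unitaryGroup (Fin n) ℂ := by
    rw [Matrix.mem_unitaryGroup_iff]
    have hstar : star Q = R * S⁻¹ := by
      show Qᴴ = R * S⁻¹
      rw [hQdef, Matrix.conjTranspose_mul, Matrix.conjTranspose_conjTranspose, hSinv]
    rw [hstar, hQdef]
    calc S⁻¹ * Rᴴ * (R * S⁻¹) = S⁻¹ * (Rᴴ * R) * S⁻¹ := by noncomm_ring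
      _ = S⁻¹ * (S * S) * S⁻¹ := by rw [hSS]
      _ = (S⁻¹ * S) * (S * S⁻¹) := by noncomm_ring
      _ = 1 := by rw [Matrix.nonsing_inv_mul _ hSdet, Matrix.mul_nonsing_inv _ hSdet, one_mul]
  have hQ1 : star Q * Q = 1 := Matrix.mem_unitaryGroup_iff'.mp hQ
  have hSA : S⁻¹ * Aᴴ = Q * (Sig (m := m) α)ᴴ * Uᴴ := by
    rw [hAH, hQdef]
    simp only [Matrix.mul_assoc]
  have hval : ∀ (W3 : Matrix (Fin n) (Fin n) ℂ) (W4 : Matrix (Fin m) (Fin m) ℂ),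
      W3 * S⁻¹ * Aᴴ * W4 * Et m n t
      = (W3 * Q) * (Sig (m := m) α)ᴴ * (Uᴴ * W4) * Et m n t := by
    intro W3 W4
    rw [Matrix.mul_assoc W3 S⁻¹ Aᴴ, hSA]
    simp only [Matrix.mul_assoc]
  set val : ℝ := ∑ k ∈ Finset.univ.filter (fun k : Fin m => (k : ℕ) < t), α (Fin.castLE hmn k)
    with hvaldef
  have hub : ∀ (W3 : Matrix.unitaryGroup (Fin n) ℂ) (W4 : Matrix.unitaryGroup (Fin m) ℂ),
      ‖Matrix.trace ((W3 : Matrix (Fin n) (Fin n) ℂ) * S⁻¹ * Aᴴ *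
        (W4 : Matrix (Fin m) (Fin m) ℂ) * Et m n t)‖ ≤ val := by
    intro W3 W4
    rw [hval W3 W4]
    exact abs_trace_le hmn α hα0 hα1 hmono t ht
      (mul_mem W3.2 hQ) (mul_mem (Unitary.star_mem hU) W4.2)
  -- attainment
  have hatt : ‖Matrix.trace ((star Q) * S⁻¹ * Aᴴ * U * Et m n t)‖ = val := by
    have e : (star Q) * S⁻¹ * Aᴴ * U * Et m n t
        = (1 : Matrix (Fin n) (Fin n) ℂ) * (Sig (m:=m) α)ᴴ * (1 : Matrix (Fin m) (Fin m) ℂ) *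
          Et m n t := by
      rw [hval (star Q) U, hQ1, hUU]
    rw [e, trace_formula hmn α t 1 1]
    have e2 : ∀ k : Fin m, (∑ a ∈ Finset.univ.filter (fun a : Fin m => (a : ℕ) < t),
        (1 : Matrix (Fin m) (Fin m) ℂ) k a *
        (1 : Matrix (Fin n) (Fin n) ℂ) (Fin.castLE hmn a) (Fin.castLE hmn k))
        = if (k : ℕ) < t then 1 else 0 := by
      intro k
      have e3 : (if (k : ℕ) < t then (1 : ℂ) else 0)
          = if k ∈ Finset.univ.filter (fun a : Fin m => (a : ℕ) < t) then 1 else 0 := by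
        simp
      rw [e3, ← Finset.sum_ite_eq' (Finset.univ.filter (fun a : Fin m => (a : ℕ) < t)) k
        (fun _ => (1 : ℂ))]
      refine Finset.sum_congr rfl fun a _ => ?_
      rw [Matrix.one_apply, Matrix.one_apply]
      by_cases h : a = k
      · subst h; simp
      · have h2 : ¬ (Fin.castLE hmn a = Fin.castLE hmn k) :=
          fun hh => h (Fin.castLE_injective hmn hh)
        simp [h, h2, Ne.symm h]
    rw [Finset.sum_congr rfl fun k _ => by rw [e2 k]]
    have e4 : (∑ k : Fin m, (α (Fin.castLE hmn k) : ℂ) * (if (k : ℕ) < t then 1 else 0))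
        = ((val : ℝ) : ℂ) := by
      rw [hvaldef, Complex.ofReal_sum, Finset.sum_filter]
      refine Finset.sum_congr rfl fun k _ => ?_
      split <;> simp
    rw [e4, Complex.norm_real, Real.norm_eq_abs, abs_of_nonneg]
    rw [hvaldef]
    exact Finset.sum_nonneg fun k _ => hα0 _
  -- sup computation
  haveI : Nonempty (Matrix.unitaryGroup (Fin n) ℂ) := ⟨1⟩
  haveI : Nonempty (Matrix.unitaryGroup (Fin m) ℂ) := ⟨1⟩
  set f : Matrix.unitaryGroup (Fin n) ℂ → Matrix.unitaryGroup (Fin m) ℂ → ℝ :=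
    fun W3 W4 => ‖Matrix.trace ((W3 : Matrix (Fin n) (Fin n) ℂ) * S⁻¹ * Aᴴ *
      (W4 : Matrix (Fin m) (Fin m) ℂ) * Et m n t)‖ with hf
  have hbdd : ∀ W3, BddAbove (Set.range (f W3)) :=
    fun W3 => ⟨val, by rintro _ ⟨W4, rfl⟩; exact hub W3 W4⟩
  have hbdd2 : BddAbove (Set.range (fun W3 => ⨆ W4, f W3 W4)) :=
    ⟨val, by rintro _ ⟨W3, rfl⟩; exact ciSup_le (hub W3)⟩
  apply le_antisymm
  · exact ciSup_le fun W3 => ciSup_le fun W4 => hub W3 W4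
  · have h1 : val = f ⟨star Q, Unitary.star_mem hQ⟩ ⟨U, hU⟩ := hatt.symm
    calc val = f ⟨star Q, Unitary.star_mem hQ⟩ ⟨U, hU⟩ := h1
      _ ≤ ⨆ W4, f ⟨star Q, Unitary.star_mem hQ⟩ W4 := le_ciSup (hbdd _) _
      _ ≤ ⨆ W3, ⨆ W4, f W3 W4 := le_ciSup hbdd2 _

end Stmt6Aux4

open Stmt6Aux Stmt6Aux2 Stmt6Aux3 Stmt6Aux4

theorem stmt6
    {m p n : ℕ} (hmn : m ≤ n)
    (A : Matrix (Fin m) (Fin n) ℂ) (B : Matrix (Fin p) (Fin n) ℂ)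
    (hrank : (Matrix.fromRows A B).rank = n)
    (U : Matrix (Fin m) (Fin m) ℂ) (hU : U ∈ Matrix.unitaryGroup (Fin m) ℂ)
    (R : Matrix (Fin n) (Fin n) ℂ) (hR : IsUnit R.det)
    (α : Fin n → ℝ)
    (hα0 : ∀ k, 0 ≤ α k) (hα1 : ∀ k, α k ≤ 1) (hmono : Antitone α)
    (hzero : ∀ k : Fin n, m ≤ (k : ℕ) → α k = 0)
    (hA : A = U * (Matrix.of fun (k : Fin m) (l : Fin n) =>
        if (k : ℕ) = (l : ℕ) then Complex.ofReal (α l) else 0) * R)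
    (hBB : Bᴴ * B = Rᴴ * Matrix.diagonal (fun l => Complex.ofReal (1 - α l ^ 2)) * R)
    (S : Matrix (Fin n) (Fin n) ℂ) (hS : S.PosDef)
    (hSsq : S * S = Aᴴ * A + Bᴴ * B)
    (i : Fin n) (him : (i : ℕ) < m) :
    α i =
(⨆ W3 : Matrix.unitaryGroup (Fin n) ℂ, ⨆ W4 : Matrix.unitaryGroup (Fin m) ℂ,
      ‖Matrix.trace ((W3 : Matrix (Fin n) (Fin n) ℂ) * S⁻¹ * Aᴴ *
        (W4 : Matrix (Fin m) (Fin m) ℂ) *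
        Matrix.of (fun (k : Fin m) (l : Fin n) =>
          if (k : ℕ) = (l : ℕ) ∧ (k : ℕ) ≤ (i : ℕ) then (1 : ℂ) else 0))‖) -
(⨆ W3 : Matrix.unitaryGroup (Fin n) ℂ, ⨆ W4 : Matrix.unitaryGroup (Fin m) ℂ,
      ‖Matrix.trace ((W3 : Matrix (Fin n) (Fin n) ℂ) * S⁻¹ * Aᴴ *
        (W4 : Matrix (Fin m) (Fin m) ℂ) *
        Matrix.of (fun (k : Fin m) (l : Fin n) =>
          if (k : ℕ) = (l : ℕ) ∧ (k : ℕ) < (i : ℕ) then (1 : ℂ) else 0))‖) := by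
  have hA' : A = U * Sig (m := m) α * R := hA
  have hE1 : (Matrix.of (fun (k : Fin m) (l : Fin n) =>
      if (k : ℕ) = (l : ℕ) ∧ (k : ℕ) ≤ (i : ℕ) then (1 : ℂ) else 0)) = Et m n ((i : ℕ) + 1) := by
    ext k l
    simp only [Et, Matrix.of_apply, Nat.lt_succ_iff]
  have hE2 : (Matrix.of (fun (k : Fin m) (l : Fin n) =>
      if (k : ℕ) = (l : ℕ) ∧ (k : ℕ) < (i : ℕ) then (1 : ℂ) else 0)) = Et m n (i : ℕ) := rfl
  rw [hE1, hE2,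
    sup_eq hmn A B U hU R α hα0 hα1 hmono hzero hA' hBB S hS hSsq ((i : ℕ) + 1) him,
    sup_eq hmn A B U hU R α hα0 hα1 hmono hzero hA' hBB S hS hSsq (i : ℕ) (le_of_lt him)]
  have hfil : Finset.univ.filter (fun k : Fin m => (k : ℕ) < (i : ℕ) + 1)
      = insert (⟨(i : ℕ), him⟩ : Fin m) (Finset.univ.filter (fun k : Fin m => (k : ℕ) < (i : ℕ))) := by
    ext a
    simp [Fin.ext_iff]
    omega
  rw [hfil, Finset.sum_insert (by simp)]
  have : Fin.castLE hmn (⟨(i : ℕ), him⟩ : Fin m) = i := by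
    apply Fin.ext
    rfl
  rw [this]
  ring
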